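/- For the matrix double algebra $A = M_n(k)$ with vertical product = matrix multiplication and horizontal product = Hadamard product, the base homomorphisms are $\Phi_L(e_{jk}) = \Phi_R(e_{jk}) = \delta_{jk}e_{jk}$ (diagonal projection), $\Phi_B(e_{jk}) = \sum_l e_{jl}$, and $\Phi_T(e_{jk}) = \sum_l e_{lk}$, and the transpose map $S(e_{jk}) = e_{kj}$ is an antipode, i.e., it satisfies $\Phi_B(a'\star(a''\circ a)) = \Phi_B((a'\circ S(a))\star a'')$, $\Phi_R(a'\circ(a\star a'')) = \Phi_R((S(a)\star a')\circ a'')$, $\Phi_L((a'\star a)\circ a'') = \Phi_L(a'\circ(a''\star S(a)))$, and $\Phi_T((a\circ a')\star a'') = \Phi_T(a'\star(S(a)\circ a''))$ for all $a, a', a'' \in A$. -/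

import Mathlib

open Matrix

variable {k : Type*} [CommRing k] {n : ℕ}

/-- The all-ones matrix, the horizontal (Hadamard) unit. -/
def allOnes (k : Type*) [CommRing k] (n : ℕ) : Matrix (Fin n) (Fin n) k :=
  Matrix.of fun _ _ => 1

/-- `Φ_L(a) = a ⋆ e` for the matrix double algebra (Hadamard with the identity). -/
def mPhiL (a : Matrix (Fin n) (Fin n) k) : Matrix (Fin n) (Fin n) k :=
  Matrix.hadamard a 1

/-- `Φ_R(a) = e ⋆ a`. -/
def mPhiR (a : Matrix (Fin n) (Fin n) k) : Matrix (Fin n) (Fin n) k :=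
  Matrix.hadamard 1 a

/-- `Φ_B(a) = a ∘ i`. -/
def mPhiB (a : Matrix (Fin n) (Fin n) k) : Matrix (Fin n) (Fin n) k :=
  a * allOnes k n

/-- `Φ_T(a) = i ∘ a`. -/
def mPhiT (a : Matrix (Fin n) (Fin n) k) : Matrix (Fin n) (Fin n) k :=
  allOnes k n * a

/-- in the matrix double algebra `M_n(k)` the base homomorphisms act
on matrix units by `Φ_L(e_{jl}) = Φ_R(e_{jl}) = δ_{jl} e_{jl}`,
`Φ_B(e_{jl}) = ∑_m e_{jm}`, `Φ_T(e_{jl}) = ∑_m e_{ml}`, and the transpose map is an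
antipode, i.e. satisfies the four defining identities of a double-algebra antipode
(with `∘` = matrix product, `⋆` = Hadamard product). -/
theorem stmt13 :
    (∀ j l : Fin n, mPhiL (Matrix.single j l (1 : k)) =
      if j = l then Matrix.single j l (1 : k) else 0) ∧
    (∀ j l : Fin n, mPhiR (Matrix.single j l (1 : k)) =
      if j = l then Matrix.single j l (1 : k) else 0) ∧
    (∀ j l : Fin n, mPhiB (Matrix.single j l (1 : k)) =
      ∑ m : Fin n, Matrix.single j m (1 : k)) ∧
    (∀ j l : Fin n, mPhiT (Matrix.single j l (1 : k)) =
      ∑ m : Fin n, Matrix.single m l (1 : k)) ∧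
    (∀ a a' a'' : Matrix (Fin n) (Fin n) k,
      mPhiB (Matrix.hadamard a' (a'' * a)) =
        mPhiB (Matrix.hadamard (a' * aᵀ) a'')) ∧
    (∀ a a' a'' : Matrix (Fin n) (Fin n) k,
      mPhiR (a' * Matrix.hadamard a a'') =
        mPhiR (Matrix.hadamard aᵀ a' * a'')) ∧
    (∀ a a' a'' : Matrix (Fin n) (Fin n) k,
      mPhiL (Matrix.hadamard a' a * a'') =
        mPhiL (a' * Matrix.hadamard a'' aᵀ)) ∧
    (∀ a a' a'' : Matrix (Fin n) (Fin n) k,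
      mPhiT (Matrix.hadamard (a * a') a'') =
        mPhiT (Matrix.hadamard a' (aᵀ * a''))) := by
  refine ⟨?_, ?_, ?_, ?_, ?_, ?_, ?_, ?_⟩
  · intro j l; ext i i'
    simp only [mPhiL, Matrix.hadamard_apply, Matrix.one_apply, Matrix.single]
    by_cases h : j = l <;> simp [h, Matrix.single] <;> aesop
  · intro j l; ext i i'
    simp only [mPhiR, Matrix.hadamard_apply, Matrix.one_apply, Matrix.single]
    by_cases h : j = l <;> simp [h, Matrix.single] <;> aesop
  · intro j l; ext i i'
    simp only [mPhiB, allOnes, Matrix.mul_apply, Matrix.of_apply, mul_one,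
      Matrix.sum_apply, Matrix.single]
    by_cases h : i = j
    · simp [h]
    · simp [h, Ne.symm h]
  · intro j l; ext i i'
    simp only [mPhiT, allOnes, Matrix.mul_apply, Matrix.of_apply, one_mul,
      Matrix.sum_apply, Matrix.single]
    by_cases h : i' = l
    · simp [h]
    · simp [h, Ne.symm h]
  · intro a a' a''; ext i j
    simp only [mPhiB, allOnes, Matrix.mul_apply, Matrix.of_apply, mul_one,
      Matrix.hadamard_apply, Matrix.transpose_apply, Finset.mul_sum, Finset.sum_mul]
    rw [Finset.sum_comm]
    exact Finset.sum_congr rfl fun p _ => Finset.sum_congr rfl fun q _ => by ring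
  · intro a a' a''; ext i j
    by_cases hij : i = j
    · subst hij
      simp only [mPhiR, Matrix.hadamard_apply, Matrix.one_apply_eq, one_mul,
        Matrix.mul_apply, Matrix.transpose_apply]
      exact Finset.sum_congr rfl fun m _ => by ring
    · simp [mPhiR, Matrix.one_apply, hij]
  · intro a a' a''; ext i j
    by_cases hij : i = j
    · subst hij
      simp only [mPhiL, Matrix.hadamard_apply, Matrix.one_apply_eq, mul_one,
        Matrix.mul_apply, Matrix.transpose_apply]
      exact Finset.sum_congr rfl fun m _ => by ring
    · simp [mPhiL, Matrix.one_apply, hij]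
  · intro a a' a''; ext i j
    simp only [mPhiT, allOnes, Matrix.mul_apply, Matrix.of_apply, one_mul,
      Matrix.hadamard_apply, Matrix.transpose_apply, Finset.mul_sum, Finset.sum_mul]
    rw [Finset.sum_comm]
    exact Finset.sum_congr rfl fun p _ => Finset.sum_congr rfl fun q _ => by ring
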